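/- For a CTS-OU process the compound Poisson intensity is Λ_a = c Γ(1-α) β^α (1 - a^α)/α: that is, with ν_2(x) = c a^α (e^{-βx} - e^{-βx/a})/x^{1+α} for x > 0, 0 < α < 1, β > 0, c > 0, 0 < a < 1, one has ∫₀^∞ ν_2(x) dx = c Γ(1-α) β^α (1-a^α)/α. -/

import Mathlib

open MeasureTheory Real Filter Set

lemma aux_int {α r : ℝ} (hα1 : α < 1) (hr : 0 < r) :
    IntegrableOn (fun x : ℝ => x ^ (-α) * Real.exp (-r * x)) (Set.Ioi 0) := by
  have := integrableOn_rpow_mul_exp_neg_mul_rpow (p := 1) (s := -α) (b := r)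
    (by linarith) zero_lt_one hr
  refine this.congr_fun (fun x hx => ?_) measurableSet_Ioi
  simp only [Real.rpow_one]

lemma aux_val {α r : ℝ} (hα1 : α < 1) (hr : 0 < r) :
    ∫ x in Set.Ioi (0:ℝ), x ^ (-α) * Real.exp (-r * x)
      = (1 / r) ^ (1 - α) * Real.Gamma (1 - α) := by
  have := Real.integral_rpow_mul_exp_neg_mul_Ioi (a := 1 - α) (r := r)
    (by linarith) hr
  rw [← this]
  refine setIntegral_congr_fun measurableSet_Ioi (fun x hx => ?_)
  ring_nf

lemma key (α p q : ℝ) (hα0 : 0 < α) (hα1 : α < 1) (hp : 0 < p) (hpq : p < q) :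
    ∫ x in Set.Ioi (0:ℝ), (Real.exp (-p*x) - Real.exp (-q*x)) / x ^ (1+α)
      = Real.Gamma (1-α) * (q ^ α - p ^ α) / α := by
  have hq : 0 < q := hp.trans hpq
  set u : ℝ → ℝ := fun x => Real.exp (-p*x) - Real.exp (-q*x) with hu_def
  set u' : ℝ → ℝ := fun x => q * Real.exp (-q*x) - p * Real.exp (-p*x) with hu'_def
  set v : ℝ → ℝ := fun x => x ^ (-α) with hv_def
  set v' : ℝ → ℝ := fun x => -α * x ^ (-α - 1) with hv'_def
  have hu : ∀ x ∈ Set.Ioi (0:ℝ), HasDerivAt u (u' x) x := by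
    intro x hx
    have h1 : HasDerivAt (fun x : ℝ => Real.exp (-p*x)) (-p * Real.exp (-p*x)) x := by
      simpa [mul_comm] using ((hasDerivAt_id x).const_mul (-p)).exp
    have h2 : HasDerivAt (fun x : ℝ => Real.exp (-q*x)) (-q * Real.exp (-q*x)) x := by
      simpa [mul_comm] using ((hasDerivAt_id x).const_mul (-q)).exp
    have := h1.sub h2
    refine this.congr_deriv ?_
    simp only [hu'_def]; ring
  have hv : ∀ x ∈ Set.Ioi (0:ℝ), HasDerivAt v (v' x) x := by
    intro x hx
    have := Real.hasDerivAt_rpow_const (x := x) (p := -α) (Or.inl (ne_of_gt hx))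
    simpa [hv_def, hv'_def, mul_comm] using this
  have hub : ∀ x : ℝ, 0 < x → 0 ≤ u x ∧ u x ≤ (q - p) * x * Real.exp (-p*x) := by
    intro x hx
    constructor
    · simp only [hu_def, sub_nonneg]
      exact Real.exp_le_exp.2 (by nlinarith)
    · have h1 : 1 - Real.exp (-((q-p)*x)) ≤ (q-p)*x := by
        nlinarith [Real.add_one_le_exp (-((q-p)*x))]
      have h2 : u x = Real.exp (-p*x) * (1 - Real.exp (-((q-p)*x))) := by
        simp only [hu_def, mul_sub, mul_one, ← Real.exp_add]
        ring_nf
      rw [h2]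
      have := Real.exp_pos (-p*x)
      nlinarith
  have hIq : IntegrableOn (fun x : ℝ => q * (x ^ (-α) * Real.exp (-q*x))) (Set.Ioi 0) :=
    (aux_int hα1 hq).const_mul q
  have hIp : IntegrableOn (fun x : ℝ => p * (x ^ (-α) * Real.exp (-p*x))) (Set.Ioi 0) :=
    (aux_int hα1 hp).const_mul p
  have hu'v : IntegrableOn (u' * v) (Set.Ioi 0) := by
    have hI : IntegrableOn (fun x : ℝ => q * (x ^ (-α) * Real.exp (-q*x))
        - p * (x ^ (-α) * Real.exp (-p*x))) (Set.Ioi 0) := hIq.sub hIp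
    refine hI.congr_fun (fun x hx => ?_) measurableSet_Ioi
    simp only [hu'_def, hv_def, Pi.mul_apply]
    ring
  have huv' : IntegrableOn (u * v') (Set.Ioi 0) := by
    have hg : IntegrableOn (fun x : ℝ => (α * (q - p)) * (x ^ (-α) * Real.exp (-p*x)))
        (Set.Ioi 0) := (aux_int hα1 hp).const_mul _
    refine hg.integrable.mono' ?_ ?_
    · apply ContinuousOn.aestronglyMeasurable ?_ measurableSet_Ioi
      apply ContinuousOn.mul
      · exact (Continuous.sub (by continuity) (by continuity)).continuousOn
      · apply ContinuousOn.mul continuousOn_const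
        intro x hx
        exact (Real.continuousAt_rpow_const x (-α-1) (Or.inl (ne_of_gt hx))).continuousWithinAt
    · filter_upwards [self_mem_ae_restrict measurableSet_Ioi] with x hx
      have hx0 : (0:ℝ) < x := hx
      obtain ⟨h0, hb⟩ := hub x hx0
      have hxp : (0:ℝ) < x ^ (-α - 1) := Real.rpow_pos_of_pos hx0 _
      have hxe : x * x ^ (-α - 1) = x ^ (-α) := by
        have h := Real.rpow_add hx0 1 (-α - 1)
        rw [Real.rpow_one] at h
        rw [← h]; congr 1; ring
      simp only [Pi.mul_apply, hv'_def]
      rw [Real.norm_eq_abs, abs_mul, abs_of_nonneg h0, abs_mul, abs_of_nonneg (le_of_lt hxp),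
        abs_of_nonpos (by linarith : -α ≤ 0)]
      calc u x * (- -α * x ^ (-α - 1)) ≤ ((q - p) * x * Real.exp (-p*x)) * (α * x ^ (-α-1)) := by
            nlinarith [mul_le_mul_of_nonneg_right hb (le_of_lt (mul_pos hα0 hxp))]
        _ = α * (q - p) * (x ^ (-α) * Real.exp (-p*x)) := by rw [← hxe]; ring
  have h_zero : Tendsto (u * v) (nhdsWithin 0 (Set.Ioi 0)) (nhds 0) := by
    have hbig : Tendsto (fun x : ℝ => (q - p) * x ^ (1 - α)) (nhdsWithin 0 (Set.Ioi 0))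
        (nhds 0) := by
      have hc : ContinuousAt (fun x : ℝ => x ^ (1 - α)) 0 :=
        Real.continuousAt_rpow_const 0 (1 - α) (Or.inr (by linarith))
      have := (hc.tendsto.mono_left (nhdsWithin_le_nhds (s := Set.Ioi (0:ℝ)))).const_mul (q - p)
      simpa [Real.zero_rpow (by linarith : (1:ℝ) - α ≠ 0)] using this
    apply squeeze_zero' ?_ ?_ hbig
    · filter_upwards [self_mem_nhdsWithin] with x hx
      have hx0 : (0:ℝ) < x := hx
      exact mul_nonneg (hub x hx0).1 (le_of_lt (Real.rpow_pos_of_pos hx0 _))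
    · filter_upwards [self_mem_nhdsWithin] with x hx
      have hx0 : (0:ℝ) < x := hx
      have hxe : x * x ^ (-α) = x ^ (1 - α) := by
        rw [show (1:ℝ) - α = 1 + -α from by ring, Real.rpow_add hx0, Real.rpow_one]
      have hexp : Real.exp (-p*x) ≤ 1 := by
        have hle : -p * x ≤ 0 := by nlinarith
        have h2 := Real.exp_le_exp.2 hle
        rwa [Real.exp_zero] at h2
      have hxp2 : (0:ℝ) < x ^ (-α) := Real.rpow_pos_of_pos hx0 _
      have hb := (hub x hx0).2
      calc (u * v) x = u x * x ^ (-α) := rfl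
        _ ≤ ((q - p) * x * Real.exp (-p*x)) * x ^ (-α) :=
            mul_le_mul_of_nonneg_right hb (le_of_lt hxp2)
        _ = ((q - p) * (x * x ^ (-α))) * Real.exp (-p*x) := by ring
        _ ≤ ((q - p) * (x * x ^ (-α))) * 1 := by
            apply mul_le_mul_of_nonneg_left hexp
            have : 0 < x * x ^ (-α) := mul_pos hx0 hxp2
            nlinarith
        _ = (q - p) * x ^ (1 - α) := by rw [mul_one, hxe]
  have h_infty : Tendsto (u * v) atTop (nhds 0) := by
    have h1 := tendsto_rpow_mul_exp_neg_mul_atTop_nhds_zero (-α) p hp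
    have h2 := tendsto_rpow_mul_exp_neg_mul_atTop_nhds_zero (-α) q hq
    have h3 := h1.sub h2
    rw [sub_zero] at h3
    refine h3.congr (fun x => ?_)
    simp only [Pi.mul_apply, hu_def, hv_def]
    ring
  have hparts := integral_Ioi_mul_deriv_eq_deriv_mul hu hv huv' hu'v h_zero h_infty
  rw [sub_zero, zero_sub] at hparts
  have hLHS : ∫ x in Set.Ioi (0:ℝ), u x * v' x
      = (-α) * ∫ x in Set.Ioi (0:ℝ), (Real.exp (-p*x) - Real.exp (-q*x)) / x ^ (1+α) := by
    rw [← integral_const_mul]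
    refine setIntegral_congr_fun measurableSet_Ioi (fun x hx => ?_)
    have hx0 : (0:ℝ) < x := hx
    have hinv : x ^ (-α - 1) = (x ^ (1 + α))⁻¹ := by
      rw [← Real.rpow_neg (le_of_lt hx0)]
      congr 1; ring
    simp only [hv'_def, hu_def, hinv, div_eq_mul_inv]
    ring
  have hRHS : ∫ x in Set.Ioi (0:ℝ), u' x * v x = (q ^ α - p ^ α) * Real.Gamma (1 - α) := by
    have e1 : ∫ x in Set.Ioi (0:ℝ), u' x * v x
        = ∫ x in Set.Ioi (0:ℝ), (q * (x ^ (-α) * Real.exp (-q*x))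
            - p * (x ^ (-α) * Real.exp (-p*x))) := by
      refine setIntegral_congr_fun measurableSet_Ioi (fun x hx => ?_)
      simp only [hu'_def, hv_def]
      ring
    rw [e1, integral_sub hIq hIp, integral_const_mul, integral_const_mul,
      aux_val hα1 hq, aux_val hα1 hp]
    have hval : ∀ r : ℝ, 0 < r → r * ((1 / r) ^ (1 - α)) = r ^ α := by
      intro r hr
      rw [one_div, ← Real.rpow_neg_one r, ← Real.rpow_mul (le_of_lt hr)]
      have h := Real.rpow_add hr 1 (-1 * (1 - α))
      rw [Real.rpow_one] at h
      rw [← h]; congr 1; ring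
    rw [← mul_assoc, ← mul_assoc, hval q hq, hval p hp]
    ring
  rw [hLHS, hRHS] at hparts
  have hαne : α ≠ 0 := ne_of_gt hα0
  rw [eq_div_iff hαne]
  linarith [hparts]

theorem stmt_14 (a α β c : ℝ) (ha0 : 0 < a) (ha1 : a < 1) (hα0 : 0 < α) (hα1 : α < 1)
    (hβ : 0 < β) (hc : 0 < c) :
    ∫ x in Set.Ioi (0:ℝ),
        c * a ^ α * (Real.exp (-β * x) - Real.exp (-β * x / a)) / x ^ (1 + α)
      = c * Real.Gamma (1 - α) * β ^ α * (1 - a ^ α) / α := by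
  have hq : β < β / a := by
    rw [lt_div_iff₀ ha0]; nlinarith
  have hkey := key α β (β / a) hα0 hα1 hβ hq
  have e1 : ∫ x in Set.Ioi (0:ℝ),
      c * a ^ α * (Real.exp (-β * x) - Real.exp (-β * x / a)) / x ^ (1 + α)
      = (c * a ^ α) * ∫ x in Set.Ioi (0:ℝ),
          (Real.exp (-β*x) - Real.exp (-(β/a)*x)) / x ^ (1+α) := by
    rw [← integral_const_mul]
    refine setIntegral_congr_fun measurableSet_Ioi (fun x hx => ?_)
    rw [mul_div_assoc]
    congr 3
    field_simp
  rw [e1, hkey]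
  have hda : (β / a) ^ α = β ^ α / a ^ α := Real.div_rpow (le_of_lt hβ) (le_of_lt ha0) α
  have hapos : (0:ℝ) < a ^ α := Real.rpow_pos_of_pos ha0 _
  rw [hda]
  field_simp
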